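/- For positive integers M, N, the rational function [M+N choose M]_{q²} · ([2M+N]/[2(M+N)]) · ∏_{i=1}^{N}(1+q^i) is a polynomial in q with integer coefficients. -/

import Mathlib

open Polynomial

noncomputable def phi : Polynomial ℤ →+* RatFunc ℚ :=
  (algebraMap (Polynomial ℚ) (RatFunc ℚ)).comp (Polynomial.mapRingHom (Int.castRingHom ℚ))

lemma phi_apply (p : Polynomial ℤ) :
    phi p = algebraMap (Polynomial ℚ) (RatFunc ℚ) (p.map (Int.castRingHom ℚ)) := rfl

lemma phi_X : phi Polynomial.X = RatFunc.X := by
  rw [phi_apply, Polynomial.map_X, RatFunc.algebraMap_X]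

lemma phi_inj : Function.Injective phi := by
  have h1 : Function.Injective (algebraMap (Polynomial ℚ) (RatFunc ℚ)) :=
    IsFractionRing.injective (Polynomial ℚ) (RatFunc ℚ)
  have h2 : Function.Injective (Polynomial.mapRingHom (Int.castRingHom ℚ)) :=
    Polynomial.map_injective _ Int.cast_injective
  exact h1.comp h2

noncomputable def qpoly (n : ℕ) : Polynomial ℤ := ∑ i ∈ Finset.range n, Polynomial.X ^ i

lemma qpoly_ne_zero {n : ℕ} (hn : 0 < n) : qpoly n ≠ 0 := by
  intro h
  have := congrArg (Polynomial.eval 1) h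
  simp [qpoly, Polynomial.eval_finset_sum] at this
  omega

lemma X_sub_one_ne : (Polynomial.X - 1 : Polynomial ℤ) ≠ 0 := by
  intro h
  have := congrArg (Polynomial.eval 0) h
  simp at this

lemma qpoly_mul (n : ℕ) : qpoly n * (Polynomial.X - 1) = Polynomial.X ^ n - 1 := by
  simpa [qpoly] using geom_sum_mul (Polynomial.X : Polynomial ℤ) n

lemma qpoly_add (a b : ℕ) : qpoly (a + b) = qpoly a + Polynomial.X ^ a * qpoly b := by
  apply mul_right_cancel₀ X_sub_one_ne
  rw [add_mul, mul_assoc, qpoly_mul, qpoly_mul, qpoly_mul, pow_add]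
  ring

noncomputable def qInt' (n : ℕ) : RatFunc ℚ := ∑ i ∈ Finset.range n, RatFunc.X ^ i

lemma qInt'_eq (n : ℕ) : qInt' n = phi (qpoly n) := by
  simp [qInt', qpoly, map_sum, map_pow, phi_X]

lemma qInt'_ne_zero {n : ℕ} (hn : 0 < n) : qInt' n ≠ 0 := by
  rw [qInt'_eq]
  intro h
  exact qpoly_ne_zero hn (phi_inj (by simpa using h))

lemma qInt'_add (a b : ℕ) : qInt' (a + b) = qInt' a + RatFunc.X ^ a * qInt' b := by
  rw [qInt'_eq, qpoly_add, map_add, map_mul, map_pow, phi_X, qInt'_eq, qInt'_eq]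

lemma qInt'_two_mul (i : ℕ) : qInt' (2 * i) = qInt' i * (1 + RatFunc.X ^ i) := by
  rw [two_mul, qInt'_add]; ring

noncomputable def Fq (n : ℕ) : RatFunc ℚ := ∏ i ∈ Finset.Icc 1 n, qInt' i
noncomputable def Tq (n : ℕ) : RatFunc ℚ := ∏ i ∈ Finset.Icc 1 n, (1 + RatFunc.X ^ i)

lemma Fq_succ (n : ℕ) : Fq (n + 1) = Fq n * qInt' (n + 1) := by
  rw [Fq, Fq, Finset.prod_Icc_succ_top (by omega)]

lemma Tq_succ (n : ℕ) : Tq (n + 1) = Tq n * (1 + RatFunc.X ^ (n + 1)) := by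
  rw [Tq, Tq, Finset.prod_Icc_succ_top (by omega)]

lemma Fq_ne_zero (n : ℕ) : Fq n ≠ 0 := by
  apply Finset.prod_ne_zero_iff.2
  intro i hi
  exact qInt'_ne_zero (by simp at hi; omega)

lemma one_add_X_pow_ne_zero (i : ℕ) : (1 + RatFunc.X ^ i : RatFunc ℚ) ≠ 0 := by
  have h0 : (1 + RatFunc.X ^ i : RatFunc ℚ) = phi (1 + Polynomial.X ^ i) := by
    simp [map_add, map_pow, phi_X]
  rw [h0]
  intro h
  have h2 : (1 + Polynomial.X ^ i : Polynomial ℤ) = 0 := phi_inj (by simpa using h)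
  have := congrArg (Polynomial.eval 1) h2
  simp at this

lemma Tq_ne_zero (n : ℕ) : Tq n ≠ 0 := by
  apply Finset.prod_ne_zero_iff.2
  intro i _
  exact one_add_X_pow_ne_zero i

noncomputable def Gb : ℕ → ℕ → Polynomial ℤ
  | _, 0 => 1
  | 0, _ + 1 => 0
  | n + 1, k + 1 => Gb n k + Polynomial.X ^ (k + 1) * Gb n (k + 1)

@[simp] lemma Gb_zero_right (n : ℕ) : Gb n 0 = 1 := by cases n <;> rfl
@[simp] lemma Gb_zero_left (k : ℕ) : Gb 0 (k + 1) = 0 := rfl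
lemma Gb_succ (n k : ℕ) : Gb (n + 1) (k + 1) = Gb n k + Polynomial.X ^ (k + 1) * Gb n (k + 1) := rfl

lemma Gb_eq_zero : ∀ n k, n < k → Gb n k = 0 := by
  intro n
  induction n with
  | zero => intro k hk; cases k with | zero => omega | succ j => rfl
  | succ m ih =>
    intro k hk
    cases k with
    | zero => omega
    | succ j =>
      rw [Gb_succ, ih j (by omega), ih (j + 1) (by omega)]
      ring

lemma Gkey : ∀ n k, k ≤ n → phi (Gb n k) * (Fq k * Fq (n - k)) = Fq n := by
  intro n
  induction n with
  | zero =>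
    intro k hk
    interval_cases k
    simp [Fq]
  | succ m ih =>
    intro k hk
    cases k with
    | zero => simp [Fq]
    | succ j =>
      have hj : j ≤ m := by omega
      rw [Gb_succ, map_add, map_mul, map_pow, phi_X]
      rcases Nat.lt_or_ge j m with hjm | hjm
      · -- j + 1 ≤ m
        obtain ⟨r, rfl⟩ : ∃ r, m = j + 1 + r := ⟨m - j - 1, by omega⟩
        have ih1 := ih j hj
        have ih2 := ih (j + 1) (by omega)
        have e1 : j + 1 + r - j = r + 1 := by omega
        have e2 : j + 1 + r - (j + 1) = r := by omega
        have e3 : j + 1 + r + 1 - (j + 1) = r + 1 := by omega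
        rw [e1] at ih1
        rw [e2] at ih2
        rw [e3]
        have hFm : Fq (j + 1 + r + 1) = Fq (j + 1 + r) * qInt' (j + 1 + r + 1) := Fq_succ _
        have hFj : Fq (j + 1) = Fq j * qInt' (j + 1) := Fq_succ _
        have hFr : Fq (r + 1) = Fq r * qInt' (r + 1) := Fq_succ _
        have hq : qInt' (j + 1 + r + 1) = qInt' (j + 1) + RatFunc.X ^ (j + 1) * qInt' (r + 1) := by
          have : j + 1 + r + 1 = (j + 1) + (r + 1) := by omega
          rw [this, qInt'_add]
        rw [hFr] at ih1
        rw [hFj] at ih2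
        rw [hFm, hq, hFj, hFr]
        linear_combination qInt' (j + 1) * ih1 + RatFunc.X ^ (j + 1) * qInt' (r + 1) * ih2
      · -- j = m
        have hjm' : j = m := by omega
        subst hjm'
        rw [Gb_eq_zero j (j + 1) (by omega), map_zero]
        have ih1 := ih j le_rfl
        have hF0 : Fq 0 = 1 := by simp [Fq]
        rw [Nat.sub_self, hF0, mul_one] at ih1
        have ha : phi (Gb j j) = 1 := by
          have := Fq_ne_zero j
          field_simp at ih1
          exact ih1
        rw [Nat.sub_self, hF0, ha]
        ring

lemma Icc_one_eq_Ioc (n : ℕ) : Finset.Icc 1 n = Finset.Ioc 0 n := by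
  ext x; simp; omega

lemma Tq_split (a b : ℕ) (h : a ≤ b) :
    Tq b = Tq a * ∏ i ∈ Finset.Icc (a + 1) b, (1 + RatFunc.X ^ i) := by
  rw [Tq, Tq, Icc_one_eq_Ioc, Icc_one_eq_Ioc, Finset.Icc_add_one_left_eq_Ioc,
    Finset.prod_Ioc_consecutive _ (Nat.zero_le a) h]

/-- The `q`-integer `[n] = 1 + q + ⋯ + q^{n-1}` as an element of `ℚ(q)`. -/
noncomputable def qInt (n : ℕ) : RatFunc ℚ := ∑ i ∈ Finset.range n, RatFunc.X ^ i

/-- The double `q`-factorial `[2M]!! = ∏_{i=1}^{M} [2i]`. -/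
noncomputable def qDoubleFact (M : ℕ) : RatFunc ℚ := ∏ i ∈ Finset.Icc 1 M, qInt (2 * i)

/-- The `q²`-analogue binomial coefficient
`[n choose m]_{q²} = [2n]!!/([2(n−m)]!! · [2m]!!)`. -/
noncomputable def qBinomSq (n m : ℕ) : RatFunc ℚ :=
  qDoubleFact n / (qDoubleFact (n - m) * qDoubleFact m)

/-- The canonical embedding of `ℤ[q]` into `ℚ(q)`. -/
noncomputable def intPolyToRatFunc (p : Polynomial ℤ) : RatFunc ℚ :=
  algebraMap (Polynomial ℚ) (RatFunc ℚ) (p.map (Int.castRingHom ℚ))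

lemma qInt_eq_qInt' : qInt = qInt' := rfl

lemma qDF (n : ℕ) : qDoubleFact n = Fq n * Tq n := by
  rw [qDoubleFact, Fq, Tq, ← Finset.prod_mul_distrib]
  exact Finset.prod_congr rfl (fun i _ => by rw [qInt_eq_qInt', qInt'_two_mul i])

/-- For positive integers `M, N`, the rational function
`[M+N choose M]_{q²} · ([2M+N]/[2(M+N)]) · ∏_{i=1}^{N}(1+qⁱ)` is a polynomial in
`q` with integer coefficients. -/
theorem thirdRuleWeight_is_intPoly (M N : ℕ) (hM : 0 < M) (hN : 0 < N) :
    ∃ p : Polynomial ℤ,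
      qBinomSq (M + N) M * (qInt (2 * M + N) / qInt (2 * (M + N))) *
          ∏ i ∈ Finset.Icc 1 N, (1 + RatFunc.X ^ i) = intPolyToRatFunc p := by
  obtain ⟨M', rfl⟩ : ∃ m, M = m + 1 := ⟨M - 1, by omega⟩
  obtain ⟨N', rfl⟩ : ∃ m, N = m + 1 := ⟨N - 1, by omega⟩
  set M := M' + 1 with hMdef
  set N := N' + 1 with hNdef
  set n := M + N with hndef
  refine ⟨(Gb n M + Polynomial.X ^ n * Gb (n - 1) M') *
      ∏ i ∈ Finset.Icc (M + 1) (n - 1), (1 + Polynomial.X ^ i), ?_⟩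
  have hsub : n - M = N := by omega
  have hn1 : n - 1 = M' + N := by omega
  have hphi : intPolyToRatFunc ((Gb n M + Polynomial.X ^ n * Gb (n - 1) M') *
      ∏ i ∈ Finset.Icc (M + 1) (n - 1), (1 + Polynomial.X ^ i)) =
      (phi (Gb n M) + RatFunc.X ^ n * phi (Gb (n - 1) M')) *
      ∏ i ∈ Finset.Icc (M + 1) (n - 1), (1 + RatFunc.X ^ i) := by
    show phi _ = _
    rw [map_mul, map_add, map_mul, map_pow, phi_X, map_prod]
    congr 1
    exact Finset.prod_congr rfl (fun i _ => by rw [map_add, map_one, map_pow, phi_X])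
  rw [hphi, qBinomSq, hsub, qDF, qDF, qDF, qInt_eq_qInt']
  have h2MN : 2 * M + N = n + M := by omega
  have h2n : qInt' (2 * (M + N)) = qInt' n * (1 + RatFunc.X ^ n) := qInt'_two_mul n
  rw [h2MN, qInt'_add, h2n]
  have hTN : (∏ i ∈ Finset.Icc 1 N, (1 + RatFunc.X ^ i)) = Tq N := rfl
  rw [hTN]
  -- key facts
  have k1 := Gkey n M (by omega)
  rw [hsub] at k1
  have k2 := Gkey (n - 1) M' (by omega)
  rw [show n - 1 - M' = N from by omega] at k2
  have k3 : Fq n = Fq (n - 1) * qInt' n := by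
    rw [show n = (n - 1) + 1 from by omega, Nat.add_sub_cancel, Fq_succ]
  have k4 : Fq M = Fq M' * qInt' M := Fq_succ M'
  have k5 : Tq n = Tq (n - 1) * (1 + RatFunc.X ^ n) := by
    rw [show n = (n - 1) + 1 from by omega, Nat.add_sub_cancel, Tq_succ]
  have k6 : Tq (n - 1) = Tq M * ∏ i ∈ Finset.Icc (M + 1) (n - 1), (1 + RatFunc.X ^ i) :=
    Tq_split M (n - 1) (by omega)
  rw [k4, k3] at k1
  have hFN := Fq_ne_zero N
  have hFM' := Fq_ne_zero M'
  have hTN' := Tq_ne_zero N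
  have hTM := Tq_ne_zero M
  have hqn := qInt'_ne_zero (show 0 < n from by omega)
  have hqM := qInt'_ne_zero (show 0 < M from by omega)
  have hu := one_add_X_pow_ne_zero n
  rw [k3, k4, k5, k6]
  rw [div_mul_div_comm, div_mul_eq_mul_div, div_eq_iff (mul_ne_zero (mul_ne_zero (mul_ne_zero hFN hTN') (mul_ne_zero (mul_ne_zero hFM' hqM) hTM)) (mul_ne_zero hqn hu))]
  set P : RatFunc ℚ := ∏ i ∈ Finset.Icc (M + 1) (n - 1), (1 + RatFunc.X ^ i) with hP
  linear_combination (-(P * Tq N * Tq M * qInt' n * (1 + RatFunc.X ^ n))) * k1 +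
    (-(RatFunc.X ^ n * qInt' M * P * Tq N * Tq M * qInt' n * (1 + RatFunc.X ^ n))) * k2
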